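/- For n ≥ 3, the number of increasing permutations of {1,...,n} with exactly one valley equals 2^(n−2) · (2^(n−1) − n). -/

import Mathlib

open Finset

/-- `ℓ` is a valley of `π`: `2 ≤ ℓ ≤ n-1` (1-based) with `π(ℓ-1) > π(ℓ) < π(ℓ+1)`. -/
def IsValley {n : ℕ} (π : Equiv.Perm (Fin n)) (ℓ : Fin n) : Prop :=
  1 ≤ ℓ.val ∧ ∃ h2 : ℓ.val + 1 < n,
    π ⟨ℓ.val - 1, lt_of_le_of_lt (Nat.sub_le _ _) ℓ.isLt⟩ > π ℓ ∧ π ℓ < π ⟨ℓ.val + 1, h2⟩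

/-- number of valleys of `π` -/
noncomputable def valCount {n : ℕ} (π : Equiv.Perm (Fin n)) : ℕ :=
  {ℓ : Fin n | IsValley π ℓ}.ncard

/-- `ℓ` is a peak of `π`. -/
def IsPeak {n : ℕ} (π : Equiv.Perm (Fin n)) (ℓ : Fin n) : Prop :=
  1 ≤ ℓ.val ∧ ∃ h2 : ℓ.val + 1 < n,
    π ⟨ℓ.val - 1, lt_of_le_of_lt (Nat.sub_le _ _) ℓ.isLt⟩ < π ℓ ∧ π ℓ > π ⟨ℓ.val + 1, h2⟩

/-- number of peaks of `π` -/
noncomputable def peakCount {n : ℕ} (π : Equiv.Perm (Fin n)) : ℕ :=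
  {ℓ : Fin n | IsPeak π ℓ}.ncard

/-- number of descents of `π` -/
noncomputable def desCount {n : ℕ} (π : Equiv.Perm (Fin n)) : ℕ :=
  {ℓ : Fin n | ∃ h : ℓ.val + 1 < n, π ⟨ℓ.val + 1, h⟩ < π ℓ}.ncard

/-- `π` is increasing: the values at its valleys, from left to right, strictly increase. -/
def Increasing {n : ℕ} (π : Equiv.Perm (Fin n)) : Prop :=
  ∀ i j : Fin n, IsValley π i → IsValley π j → i < j → π i < π j

/-- `ℓ` is the first position of a (maximal increasing) run of `π`. -/
def IsRunStart {n : ℕ} (π : Equiv.Perm (Fin n)) (ℓ : Fin n) : Prop :=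
  ℓ.val = 0 ∨ π ⟨ℓ.val - 1, lt_of_le_of_lt (Nat.sub_le _ _) ℓ.isLt⟩ > π ℓ

/-- number of (maximal increasing) runs of `π` -/
noncomputable def runCount {n : ℕ} (π : Equiv.Perm (Fin n)) : ℕ :=
  {ℓ : Fin n | IsRunStart π ℓ}.ncard

/-- `π` is flattened: the first entries of its runs, from left to right, increase. -/
def Flattened {n : ℕ} (π : Equiv.Perm (Fin n)) : Prop :=
  ∀ i j : Fin n, IsRunStart π i → IsRunStart π j → i < j → π i < π j

/-- `π i` is a right-to-left minimum of `π`. -/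
def IsRLMin {n : ℕ} (π : Equiv.Perm (Fin n)) (i : Fin n) : Prop :=
  ∀ j : Fin n, i < j → π i < π j

/-- number of right-to-left minima of `π` -/
noncomputable def rlmCount {n : ℕ} (π : Equiv.Perm (Fin n)) : ℕ :=
  {i : Fin n | IsRLMin π i}.ncard

namespace OneValleyAux

variable {n : ℕ}

def wordOf (A B C E : Finset (Fin n)) : List (Fin n) :=
  A.sort (·≤·) ++ ((B.sort (·≤·)).reverse ++ (C.sort (·≤·) ++ (E.sort (·≤·)).reverse))

def Valid (A B C E : Finset (Fin n)) : Prop :=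
  (A.card + B.card + C.card + E.card = n) ∧
  (A ∪ B ∪ C ∪ E = univ) ∧
  2 ≤ B.card ∧ 1 ≤ C.card ∧
  (∀ x ∈ A, ∃ y ∈ B, x < y) ∧
  (∀ x ∈ E, ∃ y ∈ C, x < y) ∧
  (∀ z ∈ C, ∃ y ∈ B, y < z)

theorem length_wordOf (A B C E : Finset (Fin n)) :
    (wordOf A B C E).length = A.card + B.card + C.card + E.card := by
  simp [wordOf]; ring

theorem sortlt {α : Type*} [LinearOrder α] (s : Finset α) {i j : ℕ}
    (hi : i < (s.sort (·≤·)).length) (hj : j < (s.sort (·≤·)).length) (hij : i < j) :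
    (s.sort (·≤·))[i] < (s.sort (·≤·))[j] :=
  List.pairwise_iff_getElem.mp (Finset.sortedLT_sort s).pairwise i j hi hj hij

theorem wordOf_get_A (A B C E : Finset (Fin n)) {i : ℕ} (hi : i < A.card)
    {h : i < (wordOf A B C E).length} :
    (wordOf A B C E)[i] = (A.sort (·≤·))[i]'(by simpa using hi) := by
  simp only [wordOf]
  rw [List.getElem_append_left (by simpa using hi)]

theorem wordOf_get_B (A B C E : Finset (Fin n)) {i : ℕ} (hia : A.card ≤ i)
    (hi : i < A.card + B.card) {h : i < (wordOf A B C E).length} :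
    (wordOf A B C E)[i] =
      (B.sort (·≤·))[A.card + B.card - 1 - i]'(by simp; omega) := by
  simp only [wordOf]
  rw [List.getElem_append_right (by simpa using hia),
      List.getElem_append_left (by simp; omega),
      List.getElem_reverse]
  congr 1
  simp; omega

theorem wordOf_get_C (A B C E : Finset (Fin n)) {i : ℕ} (hia : A.card + B.card ≤ i)
    (hi : i < A.card + B.card + C.card) {h : i < (wordOf A B C E).length} :
    (wordOf A B C E)[i] =
      (C.sort (·≤·))[i - (A.card + B.card)]'(by simp; omega) := by
  simp only [wordOf]
  rw [List.getElem_append_right (by simp; omega),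
      List.getElem_append_right (by simp; omega),
      List.getElem_append_left (by simp; omega)]
  congr 1
  simp; omega

theorem wordOf_get_E (A B C E : Finset (Fin n)) {i : ℕ} (hia : A.card + B.card + C.card ≤ i)
    (hi : i < A.card + B.card + C.card + E.card) {h : i < (wordOf A B C E).length} :
    (wordOf A B C E)[i] =
      (E.sort (·≤·))[A.card + B.card + C.card + E.card - 1 - i]'(by simp; omega) := by
  simp only [wordOf]
  rw [List.getElem_append_right (by simp; omega),
      List.getElem_append_right (by simp; omega),
      List.getElem_append_right (by simp; omega),
      List.getElem_reverse]
  congr 1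
  simp; omega

-- membership
theorem wordOf_mem_A (A B C E : Finset (Fin n)) {i : ℕ} (hi : i < A.card)
    {h : i < (wordOf A B C E).length} : (wordOf A B C E)[i] ∈ A := by
  rw [wordOf_get_A A B C E hi]
  exact (Finset.mem_sort _).mp (List.getElem_mem _)

theorem wordOf_mem_B (A B C E : Finset (Fin n)) {i : ℕ} (hia : A.card ≤ i)
    (hi : i < A.card + B.card) {h : i < (wordOf A B C E).length} :
    (wordOf A B C E)[i] ∈ B := by
  rw [wordOf_get_B A B C E hia hi]
  exact (Finset.mem_sort _).mp (List.getElem_mem _)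

theorem wordOf_mem_C (A B C E : Finset (Fin n)) {i : ℕ} (hia : A.card + B.card ≤ i)
    (hi : i < A.card + B.card + C.card) {h : i < (wordOf A B C E).length} :
    (wordOf A B C E)[i] ∈ C := by
  rw [wordOf_get_C A B C E hia hi]
  exact (Finset.mem_sort _).mp (List.getElem_mem _)

theorem wordOf_mem_E (A B C E : Finset (Fin n)) {i : ℕ} (hia : A.card + B.card + C.card ≤ i)
    (hi : i < A.card + B.card + C.card + E.card) {h : i < (wordOf A B C E).length} :
    (wordOf A B C E)[i] ∈ E := by
  rw [wordOf_get_E A B C E hia hi]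
  exact (Finset.mem_sort _).mp (List.getElem_mem _)

-- special entries
theorem wordOf_get_maxB (A B C E : Finset (Fin n)) (hb : 1 ≤ B.card)
    {h : A.card < (wordOf A B C E).length} :
    (wordOf A B C E)[A.card] = B.max' (Finset.card_pos.mp hb) := by
  rw [wordOf_get_B A B C E le_rfl (by omega)]
  have := Finset.sorted_last_eq_max' (s := B) (h := by rw [Finset.length_sort]; omega)
  convert this using 2
  rw [Finset.length_sort]; omega

theorem wordOf_get_minB (A B C E : Finset (Fin n)) (hb : 1 ≤ B.card)
    {h : A.card + B.card - 1 < (wordOf A B C E).length} :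
    (wordOf A B C E)[A.card + B.card - 1] = B.min' (Finset.card_pos.mp hb) := by
  rw [wordOf_get_B A B C E (by omega) (by omega)]
  have := Finset.sorted_zero_eq_min' (s := B) (h := by rw [Finset.length_sort]; omega)
  convert this using 2
  omega

theorem wordOf_get_minC (A B C E : Finset (Fin n)) (hc : 1 ≤ C.card)
    {h : A.card + B.card < (wordOf A B C E).length} :
    (wordOf A B C E)[A.card + B.card] = C.min' (Finset.card_pos.mp hc) := by
  rw [wordOf_get_C A B C E le_rfl (by omega)]
  have := Finset.sorted_zero_eq_min' (s := C) (h := by rw [Finset.length_sort]; omega)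
  convert this using 2
  omega

theorem wordOf_get_maxC (A B C E : Finset (Fin n)) (hc : 1 ≤ C.card)
    {h : A.card + B.card + C.card - 1 < (wordOf A B C E).length} :
    (wordOf A B C E)[A.card + B.card + C.card - 1] = C.max' (Finset.card_pos.mp hc) := by
  rw [wordOf_get_C A B C E (by omega) (by omega)]
  have := Finset.sorted_last_eq_max' (s := C) (h := by rw [Finset.length_sort]; omega)
  convert this using 2
  rw [Finset.length_sort]; omega


theorem disj_of_card {α : Type*} [DecidableEq α] {s t : Finset α}
    (h : (s ∪ t).card = s.card + t.card) : Disjoint s t := by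
  have h2 := Finset.card_union_add_card_inter s t
  have h3 : (s ∩ t).card = 0 := by omega
  rw [Finset.card_eq_zero] at h3
  rwa [Finset.disjoint_iff_inter_eq_empty]

theorem Valid.disjoints {A B C E : Finset (Fin n)} (hv : Valid A B C E) :
    Disjoint A B ∧ Disjoint (A ∪ B) C ∧ Disjoint (A ∪ B ∪ C) E := by
  obtain ⟨hcard, huniv, -⟩ := hv
  have hn : (A ∪ B ∪ C ∪ E).card = n := by rw [huniv]; simp
  have l1 := Finset.card_union_le (A ∪ B ∪ C) E
  have l2 := Finset.card_union_le (A ∪ B) C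
  have l3 := Finset.card_union_le A B
  refine ⟨disj_of_card (by omega), disj_of_card (by omega), disj_of_card (by omega)⟩

theorem list_disjoint_of_finset {s t : Finset (Fin n)} (h : Disjoint s t)
    {l l' : List (Fin n)} (hl : ∀ x ∈ l, x ∈ s) (hl' : ∀ x ∈ l', x ∈ t) :
    l.Disjoint l' := by
  intro x hx hx'
  exact Finset.disjoint_left.mp h (hl x hx) (hl' x hx')

theorem nodup_wordOf {A B C E : Finset (Fin n)} (hv : Valid A B C E) :
    (wordOf A B C E).Nodup := by
  obtain ⟨d1, d2, d3⟩ := hv.disjoints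
  have mA : ∀ x ∈ A.sort (·≤·), x ∈ A := fun x hx => (Finset.mem_sort _).mp hx
  have mB : ∀ x ∈ (B.sort (·≤·)).reverse, x ∈ B := fun x hx =>
    (Finset.mem_sort _).mp (List.mem_reverse.mp hx)
  have mC : ∀ x ∈ C.sort (·≤·), x ∈ C := fun x hx => (Finset.mem_sort _).mp hx
  have mE : ∀ x ∈ (E.sort (·≤·)).reverse, x ∈ E := fun x hx =>
    (Finset.mem_sort _).mp (List.mem_reverse.mp hx)
  have dAB : Disjoint A B := d1
  have dAC : Disjoint A C := (Finset.disjoint_union_left.mp d2).1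
  have dBC : Disjoint B C := (Finset.disjoint_union_left.mp d2).2
  have dAE : Disjoint A E := (Finset.disjoint_union_left.mp
    ((Finset.disjoint_union_left.mp d3).1)).1
  have dBE : Disjoint B E := (Finset.disjoint_union_left.mp
    ((Finset.disjoint_union_left.mp d3).1)).2
  have dCE : Disjoint C E := (Finset.disjoint_union_left.mp d3).2
  unfold wordOf
  rw [List.nodup_append, List.nodup_append, List.nodup_append]
  refine ⟨Finset.sort_nodup _ _, ⟨List.nodup_reverse.mpr (Finset.sort_nodup _ _),
    ⟨Finset.sort_nodup _ _, List.nodup_reverse.mpr (Finset.sort_nodup _ _),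
      fun a ha b hb hab => list_disjoint_of_finset dCE mC mE ha (hab ▸ hb)⟩, ?_⟩, ?_⟩
  · intro x hx y hx' hxy
    subst hxy
    rcases List.mem_append.mp hx' with h' | h'
    · exact Finset.disjoint_left.mp dBC (mB x hx) (mC x h')
    · exact Finset.disjoint_left.mp dBE (mB x hx) (mE x h')
  · intro x hx y hx' hxy
    subst hxy
    rcases List.mem_append.mp hx' with h' | h'
    · exact Finset.disjoint_left.mp dAB (mA x hx) (mB x h')
    · rcases List.mem_append.mp h' with h'' | h''
      · exact Finset.disjoint_left.mp dAC (mA x hx) (mC x h'')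
      · exact Finset.disjoint_left.mp dAE (mA x hx) (mE x h'')

section Steps

variable {A B C E : Finset (Fin n)}

theorem length_wordOf_eq_n (hv : Valid A B C E) : (wordOf A B C E).length = n := by
  rw [length_wordOf]; exact hv.1

-- Step lemmas; indices are ℕ.
theorem stepS1 (hv : Valid A B C E) {i : ℕ} (hi : i + 1 ≤ A.card) {h1 : i < (wordOf A B C E).length}
    {h2 : i + 1 < (wordOf A B C E).length} :
    (wordOf A B C E)[i] < (wordOf A B C E)[i+1] := by
  rcases Nat.lt_or_ge (i+1) A.card with hlt | hge
  · rw [wordOf_get_A A B C E (by omega), wordOf_get_A A B C E hlt]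
    exact sortlt A (by rw [Finset.length_sort]; omega) (by rw [Finset.length_sort]; omega)
      (by omega)
  · -- i + 1 = A.card
    have hb : 1 ≤ B.card := by
      have := hv.2.2.1; omega
    have hmem : (wordOf A B C E)[i] ∈ A := wordOf_mem_A A B C E (by omega)
    obtain ⟨y, hy, hxy⟩ := hv.2.2.2.2.1 _ hmem
    have : (wordOf A B C E)[i+1] = B.max' (Finset.card_pos.mp hb) := by
      have e : i + 1 = A.card := by omega
      rw [show (wordOf A B C E)[i+1] = (wordOf A B C E)[A.card]'(by omega) by
        congr 1]
      exact wordOf_get_maxB A B C E hb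
    rw [this]
    exact lt_of_lt_of_le hxy (Finset.le_max' _ _ hy)

theorem stepS2 (hv : Valid A B C E) {i : ℕ} (hia : A.card ≤ i) (hi : i + 1 ≤ A.card + B.card - 1)
    {h1 : i < (wordOf A B C E).length} {h2 : i + 1 < (wordOf A B C E).length} :
    (wordOf A B C E)[i+1] < (wordOf A B C E)[i] := by
  have hb : 2 ≤ B.card := hv.2.2.1
  rw [wordOf_get_B A B C E hia (by omega), wordOf_get_B A B C E (by omega) (by omega)]
  exact sortlt B (by rw [Finset.length_sort]; omega) (by rw [Finset.length_sort]; omega)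
    (by omega)

theorem stepS3 (hv : Valid A B C E) {i : ℕ} (hia : A.card + B.card - 1 ≤ i) (hi : i + 1 ≤ A.card + B.card + C.card - 1)
    {h1 : i < (wordOf A B C E).length} {h2 : i + 1 < (wordOf A B C E).length} :
    (wordOf A B C E)[i] < (wordOf A B C E)[i+1] := by
  have hb : 2 ≤ B.card := hv.2.2.1
  have hc : 1 ≤ C.card := hv.2.2.2.1
  rcases Nat.lt_or_ge i (A.card + B.card) with hlt | hge
  · -- i = A.card + B.card - 1 : min B < min C
    have e : i = A.card + B.card - 1 := by omega
    have eB : (wordOf A B C E)[i] = B.min' (Finset.card_pos.mp (by omega)) := by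
      rw [show (wordOf A B C E)[i] = (wordOf A B C E)[A.card + B.card - 1]'(by omega) by
        congr 1]
      exact wordOf_get_minB A B C E (by omega)
    have eC : (wordOf A B C E)[i+1] = C.min' (Finset.card_pos.mp hc) := by
      rw [show (wordOf A B C E)[i+1] = (wordOf A B C E)[A.card + B.card]'(by omega) by
        congr 1; omega]
      exact wordOf_get_minC A B C E hc
    rw [eB, eC]
    obtain ⟨y, hy, hymin⟩ := hv.2.2.2.2.2.2 _ (C.min'_mem (Finset.card_pos.mp hc))
    exact lt_of_le_of_lt (Finset.min'_le _ _ hy) hymin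
  · rw [wordOf_get_C A B C E hge (by omega), wordOf_get_C A B C E (by omega) (by omega)]
    exact sortlt C (by rw [Finset.length_sort]; omega) (by rw [Finset.length_sort]; omega)
      (by omega)

theorem stepS4 (hv : Valid A B C E) {i : ℕ} (hia : A.card + B.card + C.card - 1 ≤ i)
    {h1 : i < (wordOf A B C E).length} {h2 : i + 1 < (wordOf A B C E).length} :
    (wordOf A B C E)[i+1] < (wordOf A B C E)[i] := by
  have hb : 2 ≤ B.card := hv.2.2.1
  have hc : 1 ≤ C.card := hv.2.2.2.1
  have hlen := length_wordOf (A := A) (B := B) (C := C) (E := E)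
  rcases Nat.lt_or_ge i (A.card + B.card + C.card) with hlt | hge
  · -- i = A.card + B.card + C.card - 1 : max C > (elt of E)
    have eC : (wordOf A B C E)[i] = C.max' (Finset.card_pos.mp hc) := by
      rw [show (wordOf A B C E)[i] = (wordOf A B C E)[A.card + B.card + C.card - 1]'(by omega) by
        congr 1; omega]
      exact wordOf_get_maxC A B C E hc
    have hmem : (wordOf A B C E)[i+1] ∈ E := wordOf_mem_E A B C E (by omega) (by omega)
    obtain ⟨y, hy, hxy⟩ := hv.2.2.2.2.2.1 _ hmem
    rw [eC]
    exact lt_of_lt_of_le hxy (Finset.le_max' _ _ hy)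
  · rw [wordOf_get_E A B C E hge (by omega), wordOf_get_E A B C E (by omega) (by omega)]
    exact sortlt E (by rw [Finset.length_sort]; omega) (by rw [Finset.length_sort]; omega)
      (by omega)

end Steps


theorem getElem_congr' {α : Type*} {l : List α} {i j : ℕ} (h : i = j) (hi : i < l.length) :
    l[i] = l[j]'(h ▸ hi) := by subst h; rfl

noncomputable def permOf (A B C E : Finset (Fin n)) (hv : Valid A B C E) :
    Equiv.Perm (Fin n) :=
  Equiv.ofBijective
    (fun i => (wordOf A B C E)[i.val]'(by rw [length_wordOf_eq_n hv]; exact i.isLt))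
    (Finite.injective_iff_bijective.mp (by
      intro i j hij
      have hnd := nodup_wordOf hv
      have := List.nodup_iff_injective_get.mp hnd
        (a₁ := ⟨i.val, by rw [length_wordOf_eq_n hv]; exact i.isLt⟩)
        (a₂ := ⟨j.val, by rw [length_wordOf_eq_n hv]; exact j.isLt⟩)
        (by simpa [List.get_eq_getElem] using hij)
      exact Fin.ext (by simpa using congrArg Fin.val this)))

theorem permOf_apply {A B C E : Finset (Fin n)} (hv : Valid A B C E) (i : Fin n) :
    permOf A B C E hv i =
      (wordOf A B C E)[i.val]'(by rw [length_wordOf_eq_n hv]; exact i.isLt) := rfl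

theorem word_gt_iff {A B C E : Finset (Fin n)} (hv : Valid A B C E) {j : ℕ} (hj : j + 1 < n)
    {h1 : j < (wordOf A B C E).length} {h2 : j + 1 < (wordOf A B C E).length} :
    (wordOf A B C E)[j+1] < (wordOf A B C E)[j] ↔
      ((A.card ≤ j ∧ j < A.card + B.card - 1) ∨ A.card + B.card + C.card - 1 ≤ j) := by
  have hb := hv.2.2.1
  have hc := hv.2.2.2.1
  have hn' := hv.1
  by_cases hc1 : j + 1 ≤ A.card
  · exact iff_of_false (not_lt.mpr (le_of_lt (stepS1 hv hc1))) (by omega)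
  · by_cases hc2 : j + 1 ≤ A.card + B.card - 1
    · exact iff_of_true (stepS2 hv (by omega) hc2) (by omega)
    · by_cases hc3 : j + 1 ≤ A.card + B.card + C.card - 1
      · exact iff_of_false (not_lt.mpr (le_of_lt (stepS3 hv (by omega) hc3))) (by omega)
      · exact iff_of_true (stepS4 hv (by omega)) (by omega)

theorem isValley_permOf_iff {A B C E : Finset (Fin n)} (hv : Valid A B C E) (ℓ : Fin n) :
    IsValley (permOf A B C E hv) ℓ ↔ ℓ.val = A.card + B.card - 1 := by
  have hb := hv.2.2.1
  have hc := hv.2.2.2.1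
  have hn' := hv.1
  have hlen := length_wordOf_eq_n hv
  constructor
  · rintro ⟨hone, hlt2, hgt, hltv⟩
    rw [permOf_apply, permOf_apply] at hgt hltv
    simp only [gt_iff_lt] at hgt
    -- hgt : w[ℓ.val] < w[ℓ.val - 1]
    have hd1 : (wordOf A B C E)[(ℓ.val - 1) + 1]'(by omega) <
        (wordOf A B C E)[ℓ.val - 1]'(by omega) := by
      rw [getElem_congr' (show (ℓ.val - 1) + 1 = ℓ.val by omega)]
      exact hgt
    have hd2 := (word_gt_iff hv (j := ℓ.val - 1) (by omega)).mp hd1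
    have ha2 : ¬ ((A.card ≤ ℓ.val ∧ ℓ.val < A.card + B.card - 1) ∨
        A.card + B.card + C.card - 1 ≤ ℓ.val) :=
      fun hcon => absurd ((word_gt_iff hv (j := ℓ.val) hlt2).mpr hcon)
        (not_lt.mpr (le_of_lt hltv))
    omega
  · intro he
    have h2 : ℓ.val + 1 < n := by omega
    refine ⟨by omega, h2, ?_, ?_⟩
    · rw [permOf_apply, permOf_apply]
      simp only [gt_iff_lt]
      have := stepS2 hv (A := A) (B := B) (C := C) (E := E) (i := ℓ.val - 1)
        (by omega) (by omega) (h1 := by omega) (h2 := by omega)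
      rw [getElem_congr' (show (ℓ.val - 1) + 1 = ℓ.val by omega)] at this
      exact this
    · rw [permOf_apply, permOf_apply]
      exact stepS3 hv (by omega) (by omega)


/-! ### Extraction of a tuple from a one-valley permutation -/

def DescAt (π : Equiv.Perm (Fin n)) (i : ℕ) : Prop :=
  ∃ h2 : i + 1 < n, π ⟨i+1, h2⟩ < π ⟨i, Nat.lt_of_succ_lt h2⟩

noncomputable def aN (π : Equiv.Perm (Fin n)) : ℕ := sInf {i | DescAt π i}
noncomputable def vN (π : Equiv.Perm (Fin n)) : ℕ :=
  sInf {i | ∃ h : i < n, IsValley π ⟨i, h⟩}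
noncomputable def cN (π : Equiv.Perm (Fin n)) : ℕ :=
  sInf ({i | vN π < i ∧ DescAt π i} ∪ {n-1})

def wN (π : Equiv.Perm (Fin n)) : List (Fin n) := List.ofFn π

theorem length_wN (π : Equiv.Perm (Fin n)) : (wN π).length = n := by simp [wN]

theorem nodup_wN (π : Equiv.Perm (Fin n)) : (wN π).Nodup :=
  List.nodup_ofFn.mpr π.injective

theorem wN_get (π : Equiv.Perm (Fin n)) {i : ℕ} (hi : i < n)
    {h : i < (wN π).length} : (wN π)[i] = π ⟨i, hi⟩ := by
  simp [wN]

noncomputable def tupA (π : Equiv.Perm (Fin n)) : Finset (Fin n) :=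
  ((wN π).take (aN π)).toFinset
noncomputable def tupB (π : Equiv.Perm (Fin n)) : Finset (Fin n) :=
  (((wN π).drop (aN π)).take (vN π + 1 - aN π)).toFinset
noncomputable def tupC (π : Equiv.Perm (Fin n)) : Finset (Fin n) :=
  (((wN π).drop (vN π + 1)).take (cN π - vN π)).toFinset
noncomputable def tupE (π : Equiv.Perm (Fin n)) : Finset (Fin n) :=
  ((wN π).drop (cN π + 1)).toFinset

section Extract

variable {π : Equiv.Perm (Fin n)} {v : Fin n}

theorem asc_of_not_descAt (hnd : ¬ DescAt π i) (h2 : i + 1 < n) :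
    π ⟨i, Nat.lt_of_succ_lt h2⟩ < π ⟨i+1, h2⟩ := by
  rcases lt_trichotomy (π ⟨i, Nat.lt_of_succ_lt h2⟩) (π ⟨i+1, h2⟩) with h | h | h
  · exact h
  · exact absurd (π.injective h) (by simp [Fin.ext_iff])
  · exact absurd ⟨h2, h⟩ hnd

theorem vN_eq (hval : IsValley π v) (huniq : ∀ ℓ, IsValley π ℓ → ℓ = v) :
    vN π = v.val := by
  have hmem : v.val ∈ {i | ∃ h : i < n, IsValley π ⟨i, h⟩} := ⟨v.isLt, by simpa using hval⟩
  have h1 := Nat.sInf_mem (s := {i | ∃ h : i < n, IsValley π ⟨i, h⟩}) ⟨v.val, hmem⟩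
  obtain ⟨h, hvl⟩ := h1
  have := huniq _ hvl
  have h2 := congrArg Fin.val this
  simpa [vN] using h2

theorem descAt_of_valley_pred (hval : IsValley π v) : DescAt π (v.val - 1) := by
  obtain ⟨h1, h2, hgt, hlt⟩ := hval
  refine ⟨by omega, ?_⟩
  have e1 : (⟨v.val - 1 + 1, by omega⟩ : Fin n) = v :=
    Fin.ext (by show v.val - 1 + 1 = v.val; omega)
  rw [e1]
  exact hgt

theorem not_descAt_vN (hval : IsValley π v) (huniq : ∀ ℓ, IsValley π ℓ → ℓ = v) :
    ¬ DescAt π (vN π) := by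
  rw [vN_eq hval huniq]
  obtain ⟨h1, h2, hgt, hlt⟩ := hval
  rintro ⟨h2', hd⟩
  have hd' : π ⟨v.val + 1, h2⟩ < π v := by
    have : (⟨v.val, Nat.lt_of_succ_lt h2'⟩ : Fin n) = v := Fin.ext rfl
    rw [this] at hd
    exact hd
  exact absurd hlt (not_lt.mpr (le_of_lt hd'))

theorem aN_le (hval : IsValley π v) : aN π ≤ v.val - 1 :=
  Nat.sInf_le (descAt_of_valley_pred hval)

theorem descAt_aN (hval : IsValley π v) : DescAt π (aN π) :=
  Nat.sInf_mem (s := {i | DescAt π i}) ⟨v.val - 1, descAt_of_valley_pred hval⟩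

theorem not_descAt_lt_aN {i : ℕ} (hi : i < aN π) : ¬ DescAt π i :=
  Nat.notMem_of_lt_sInf hi

-- a valley is created at i+1 when a descent is followed by a non-descent
theorem valley_succ (hval : IsValley π v) (huniq : ∀ ℓ, IsValley π ℓ → ℓ = v)
    {i : ℕ} (hd : DescAt π i) (h2 : i + 2 < n) (hnd : ¬ DescAt π (i+1)) :
    i + 1 = v.val := by
  obtain ⟨h2', hdd⟩ := hd
  have hasc := asc_of_not_descAt hnd (by omega)
  have hv : IsValley π ⟨i+1, by omega⟩ := by
    refine ⟨by show 1 ≤ i + 1; omega, ⟨by show i + 1 + 1 < n; omega, ?_, ?_⟩⟩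
    · show π ⟨(i+1) - 1, _⟩ > π ⟨i+1, _⟩
      have e : (⟨(i+1) - 1, lt_of_le_of_lt (Nat.sub_le _ _) (by omega : i + 1 < n)⟩ : Fin n)
          = ⟨i, Nat.lt_of_succ_lt h2'⟩ := Fin.ext (by show (i+1) - 1 = i; omega)
      rw [e]
      exact hdd
    · show π ⟨i+1, _⟩ < π ⟨i+1+1, _⟩
      exact hasc
  have := huniq _ hv
  exact congrArg Fin.val this

theorem descAt_of_lt_vN (hval : IsValley π v) (huniq : ∀ ℓ, IsValley π ℓ → ℓ = v)
    {i : ℕ} (hai : aN π ≤ i) (hiv : i < vN π) : DescAt π i := by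
  rw [vN_eq hval huniq] at hiv
  induction i with
  | zero =>
    have : aN π = 0 := by omega
    rw [← this]
    exact descAt_aN hval
  | succ j ih =>
    rcases Nat.lt_or_ge j (aN π) with hj | hj
    · have : aN π = j + 1 := by omega
      rw [← this]
      exact descAt_aN hval
    · have hdj : DescAt π j := ih hj (by omega)
      by_contra hnd
      have h2 : j + 2 < n := by have := v.isLt; omega
      have := valley_succ hval huniq hdj h2 hnd
      omega

theorem cN_mem : cN π ∈ ({i | vN π < i ∧ DescAt π i} ∪ {n-1} : Set ℕ) :=
  Nat.sInf_mem (s := _) ⟨n-1, Or.inr rfl⟩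

theorem cN_le : cN π ≤ n - 1 := Nat.sInf_le (Or.inr rfl)

theorem vN_lt_cN (hval : IsValley π v) (huniq : ∀ ℓ, IsValley π ℓ → ℓ = v) :
    vN π < cN π := by
  rcases cN_mem (π := π) with h | h
  · exact h.1
  · have : cN π = n - 1 := h
    rw [this, vN_eq hval huniq]
    obtain ⟨-, h2, -⟩ := hval
    omega

theorem not_descAt_of_lt_cN (hval : IsValley π v) (huniq : ∀ ℓ, IsValley π ℓ → ℓ = v)
    {i : ℕ} (hvi : vN π ≤ i) (hic : i < cN π) : ¬ DescAt π i := by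
  rcases Nat.eq_or_lt_of_le hvi with he | hlt
  · rw [← he]; exact not_descAt_vN hval huniq
  · intro hd
    have h3 : cN π ≤ i := by unfold cN; exact Nat.sInf_le (Or.inl ⟨hlt, hd⟩)
    omega

theorem descAt_of_ge_cN (hval : IsValley π v) (huniq : ∀ ℓ, IsValley π ℓ → ℓ = v)
    {i : ℕ} (hci : cN π ≤ i) (hin : i + 1 < n) : DescAt π i := by
  induction i with
  | zero =>
    have h0 : cN π = 0 := by omega
    rcases cN_mem (π := π) with h | h
    · rw [← h0]; exact h.2
    · exfalso; have : cN π = n - 1 := h; omega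
  | succ j ih =>
    rcases Nat.lt_or_ge j (cN π) with hj | hj
    · have he : cN π = j + 1 := by omega
      rcases cN_mem (π := π) with h | h
      · rw [← he]; exact h.2
      · exfalso; have : cN π = n - 1 := h; omega
    · have hdj : DescAt π j := ih hj (by omega)
      by_contra hnd
      have hvj := valley_succ hval huniq hdj (by omega) hnd
      have := vN_eq hval huniq
      have := vN_lt_cN hval huniq
      omega

theorem aN_lt_vN (hval : IsValley π v) (huniq : ∀ ℓ, IsValley π ℓ → ℓ = v) :
    aN π < vN π := by
  have h1 := aN_le hval
  have h2 := vN_eq hval huniq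
  have h3 : 1 ≤ v.val := hval.1
  omega

-- monotone chains
theorem chain_asc {l r : ℕ} (hr : r < n)
    (hstep : ∀ k, l ≤ k → k < r → ¬ DescAt π k) :
    ∀ i j (hi : l ≤ i) (hij : i < j) (hj : j ≤ r),
      π ⟨i, by omega⟩ < π ⟨j, by omega⟩ := by
  intro i j hi hij hj
  induction j with
  | zero => omega
  | succ j ih =>
    have hasc : π ⟨j, by omega⟩ < π ⟨j+1, by omega⟩ :=
      asc_of_not_descAt (hstep j (by omega) (by omega)) (by omega)
    rcases Nat.eq_or_lt_of_le (Nat.succ_le_of_lt hij) with he | hlt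
    · have : i = j := by omega
      subst this; exact hasc
    · exact lt_trans (ih (by omega) (by omega)) hasc

theorem chain_desc {l r : ℕ} (hr : r < n)
    (hstep : ∀ k, l ≤ k → k < r → DescAt π k) :
    ∀ i j (hi : l ≤ i) (hij : i < j) (hj : j ≤ r),
      π ⟨j, by omega⟩ < π ⟨i, by omega⟩ := by
  intro i j hi hij hj
  induction j with
  | zero => omega
  | succ j ih =>
    obtain ⟨h2, hd⟩ := hstep j (by omega) (by omega)
    have hd' : π ⟨j+1, by omega⟩ < π ⟨j, by omega⟩ := hd
    rcases Nat.eq_or_lt_of_le (Nat.succ_le_of_lt hij) with he | hlt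
    · have : i = j := by omega
      subst this; exact hd'
    · exact lt_trans hd' (ih (by omega) (by omega))

end Extract


section Encode

variable {π : Equiv.Perm (Fin n)} {v : Fin n}

theorem vN_add_lt (hval : IsValley π v) (huniq : ∀ ℓ, IsValley π ℓ → ℓ = v) :
    vN π + 1 < n := by
  rw [vN_eq hval huniq]
  obtain ⟨-, h2, -⟩ := hval
  exact h2

theorem sort_toFinset_of_sorted {l : List (Fin n)} (hnd : l.Nodup)
    (hs : l.Pairwise (· ≤ ·)) : l.toFinset.sort (·≤·) = l :=
  List.Perm.eq_of_pairwise (fun a b _ _ h1 h2 => le_antisymm h1 h2)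
    (Finset.pairwise_sort _ _) hs
    (List.perm_of_nodup_nodup_toFinset_eq (Finset.sort_nodup _ _) hnd
      (by rw [Finset.sort_toFinset]))

-- bundled bounds
theorem encode_bounds (hval : IsValley π v) (huniq : ∀ ℓ, IsValley π ℓ → ℓ = v) :
    aN π < vN π ∧ vN π + 1 < n ∧ vN π < cN π ∧ cN π ≤ n - 1 :=
  ⟨aN_lt_vN hval huniq, vN_add_lt hval huniq, vN_lt_cN hval huniq, cN_le⟩

theorem sort_tupA (hval : IsValley π v) (huniq : ∀ ℓ, IsValley π ℓ → ℓ = v) :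
    (tupA π).sort (·≤·) = (wN π).take (aN π) := by
  obtain ⟨hb1, hb2, hb3, hb4⟩ := encode_bounds hval huniq
  have hlen1 : ((wN π).take (aN π)).length = aN π := by
    rw [List.length_take, length_wN]; omega
  apply sort_toFinset_of_sorted ((List.take_sublist _ _).nodup (nodup_wN π))
  apply List.pairwise_iff_getElem.mpr
  intro i j hi hj hij
  rw [List.getElem_take, List.getElem_take, wN_get π (by omega), wN_get π (by omega)]
  exact le_of_lt (chain_asc (l := 0) (r := aN π) (by omega)
    (fun k _ hk => not_descAt_lt_aN hk) i j (by omega) hij (by omega))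

theorem sort_tupB (hval : IsValley π v) (huniq : ∀ ℓ, IsValley π ℓ → ℓ = v) :
    (tupB π).sort (·≤·) = (((wN π).drop (aN π)).take (vN π + 1 - aN π)).reverse := by
  obtain ⟨hb1, hb2, hb3, hb4⟩ := encode_bounds hval huniq
  have hlen2 : (((wN π).drop (aN π)).take (vN π + 1 - aN π)).length = vN π + 1 - aN π := by
    rw [List.length_take, List.length_drop, length_wN]; omega
  have hnd2 : (((wN π).drop (aN π)).take (vN π + 1 - aN π)).Nodup :=
    ((List.take_sublist _ _).trans (List.drop_sublist _ _)).nodup (nodup_wN π)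
  have := sort_toFinset_of_sorted (l := (((wN π).drop (aN π)).take (vN π + 1 - aN π)).reverse)
    (List.nodup_reverse.mpr hnd2) ?_
  · rw [← this]
    congr 1
    unfold tupB
    rw [List.toFinset_reverse]
  · apply List.pairwise_iff_getElem.mpr
    intro i j hi hj hij
    rw [List.length_reverse, hlen2] at hi hj
    rw [List.getElem_reverse, List.getElem_reverse, List.getElem_take, List.getElem_take,
        List.getElem_drop, List.getElem_drop, wN_get π (by omega), wN_get π (by omega)]
    refine le_of_lt (chain_desc (l := aN π) (r := vN π) (by omega)
      (fun k hk1 hk2 => descAt_of_lt_vN hval huniq hk1 hk2) _ _ (by omega) (by omega)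
      (by omega))

theorem sort_tupC (hval : IsValley π v) (huniq : ∀ ℓ, IsValley π ℓ → ℓ = v) :
    (tupC π).sort (·≤·) = ((wN π).drop (vN π + 1)).take (cN π - vN π) := by
  obtain ⟨hb1, hb2, hb3, hb4⟩ := encode_bounds hval huniq
  have hlen3 : (((wN π).drop (vN π + 1)).take (cN π - vN π)).length = cN π - vN π := by
    rw [List.length_take, List.length_drop, length_wN]; omega
  apply sort_toFinset_of_sorted
    (((List.take_sublist _ _).trans (List.drop_sublist _ _)).nodup (nodup_wN π))
  apply List.pairwise_iff_getElem.mpr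
  intro i j hi hj hij
  rw [hlen3] at hi hj
  rw [List.getElem_take, List.getElem_take, List.getElem_drop, List.getElem_drop,
      wN_get π (by omega), wN_get π (by omega)]
  exact le_of_lt (chain_asc (l := vN π) (r := cN π) (by omega)
    (fun k hk1 hk2 => not_descAt_of_lt_cN hval huniq hk1 hk2) _ _ (by omega) (by omega)
    (by omega))

theorem sort_tupE (hval : IsValley π v) (huniq : ∀ ℓ, IsValley π ℓ → ℓ = v) :
    (tupE π).sort (·≤·) = ((wN π).drop (cN π + 1)).reverse := by
  obtain ⟨hb1, hb2, hb3, hb4⟩ := encode_bounds hval huniq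
  have hlen4 : ((wN π).drop (cN π + 1)).length = n - (cN π + 1) := by
    rw [List.length_drop, length_wN]
  have hnd4 : ((wN π).drop (cN π + 1)).Nodup := (List.drop_sublist _ _).nodup (nodup_wN π)
  have := sort_toFinset_of_sorted (l := ((wN π).drop (cN π + 1)).reverse)
    (List.nodup_reverse.mpr hnd4) ?_
  · rw [← this]
    congr 1
    unfold tupE
    rw [List.toFinset_reverse]
  · apply List.pairwise_iff_getElem.mpr
    intro i j hi hj hij
    rw [List.length_reverse, hlen4] at hi hj
    rw [List.getElem_reverse, List.getElem_reverse, List.getElem_drop, List.getElem_drop,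
        wN_get π (by omega), wN_get π (by omega)]
    refine le_of_lt (chain_desc (l := cN π) (r := n - 1) (by omega)
      (fun k hk1 hk2 => descAt_of_ge_cN hval huniq hk1 (by omega)) _ _ (by omega) (by omega)
      (by omega))

theorem wordOf_tup (hval : IsValley π v) (huniq : ∀ ℓ, IsValley π ℓ → ℓ = v) :
    wordOf (tupA π) (tupB π) (tupC π) (tupE π) = wN π := by
  unfold wordOf
  rw [sort_tupA hval huniq, sort_tupB hval huniq, sort_tupC hval huniq, sort_tupE hval huniq,
      List.reverse_reverse, List.reverse_reverse]
  obtain ⟨hb1, hb2, hb3, hb4⟩ := encode_bounds hval huniq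
  have e1 : ((wN π).drop (vN π + 1)).take (cN π - vN π) ++ (wN π).drop (cN π + 1)
      = (wN π).drop (vN π + 1) := by
    have := List.take_append_drop (cN π - vN π) ((wN π).drop (vN π + 1))
    rw [List.drop_drop] at this
    rw [show vN π + 1 + (cN π - vN π) = cN π + 1 by omega] at this
    exact this
  rw [e1]
  have e2 : ((wN π).drop (aN π)).take (vN π + 1 - aN π) ++ (wN π).drop (vN π + 1)
      = (wN π).drop (aN π) := by
    have := List.take_append_drop (vN π + 1 - aN π) ((wN π).drop (aN π))
    rw [List.drop_drop] at this
    rw [show aN π + (vN π + 1 - aN π) = vN π + 1 by omega] at this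
    exact this
  rw [e2, List.take_append_drop]

end Encode


section Encode2

variable {π : Equiv.Perm (Fin n)} {v : Fin n}

theorem card_tupA (hval : IsValley π v) (huniq : ∀ ℓ, IsValley π ℓ → ℓ = v) :
    (tupA π).card = aN π := by
  obtain ⟨hb1, hb2, hb3, hb4⟩ := encode_bounds hval huniq
  unfold tupA
  rw [List.toFinset_card_of_nodup ((List.take_sublist _ _).nodup (nodup_wN π)),
      List.length_take, length_wN]
  omega

theorem card_tupB (hval : IsValley π v) (huniq : ∀ ℓ, IsValley π ℓ → ℓ = v) :
    (tupB π).card = vN π + 1 - aN π := by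
  obtain ⟨hb1, hb2, hb3, hb4⟩ := encode_bounds hval huniq
  unfold tupB
  rw [List.toFinset_card_of_nodup
      (((List.take_sublist _ _).trans (List.drop_sublist _ _)).nodup (nodup_wN π)),
      List.length_take, List.length_drop, length_wN]
  omega

theorem card_tupC (hval : IsValley π v) (huniq : ∀ ℓ, IsValley π ℓ → ℓ = v) :
    (tupC π).card = cN π - vN π := by
  obtain ⟨hb1, hb2, hb3, hb4⟩ := encode_bounds hval huniq
  unfold tupC
  rw [List.toFinset_card_of_nodup
      (((List.take_sublist _ _).trans (List.drop_sublist _ _)).nodup (nodup_wN π)),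
      List.length_take, List.length_drop, length_wN]
  omega

theorem card_tupE (hval : IsValley π v) (huniq : ∀ ℓ, IsValley π ℓ → ℓ = v) :
    (tupE π).card = n - (cN π + 1) := by
  unfold tupE
  rw [List.toFinset_card_of_nodup ((List.drop_sublist _ _).nodup (nodup_wN π)),
      List.length_drop, length_wN]

theorem valid_tup (hval : IsValley π v) (huniq : ∀ ℓ, IsValley π ℓ → ℓ = v) :
    Valid (tupA π) (tupB π) (tupC π) (tupE π) := by
  obtain ⟨hb1, hb2, hb3, hb4⟩ := encode_bounds hval huniq
  have hcA := card_tupA hval huniq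
  have hcB := card_tupB hval huniq
  have hcC := card_tupC hval huniq
  have hcE := card_tupE hval huniq
  have hlenA : ((wN π).take (aN π)).length = aN π := by
    rw [List.length_take, length_wN]; omega
  have hlenB : (((wN π).drop (aN π)).take (vN π + 1 - aN π)).length = vN π + 1 - aN π := by
    rw [List.length_take, List.length_drop, length_wN]; omega
  have hlenC : (((wN π).drop (vN π + 1)).take (cN π - vN π)).length = cN π - vN π := by
    rw [List.length_take, List.length_drop, length_wN]; omega
  have hlenE : ((wN π).drop (cN π + 1)).length = n - (cN π + 1) := by
    rw [List.length_drop, length_wN]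
  refine ⟨by omega, ?_, by omega, by omega, ?_, ?_, ?_⟩
  · -- union is univ
    have hU : tupA π ∪ (tupB π ∪ (tupC π ∪ tupE π)) = (wN π).toFinset := by
      conv_rhs => rw [← wordOf_tup hval huniq]
      unfold wordOf
      rw [sort_tupA hval huniq, sort_tupB hval huniq, sort_tupC hval huniq,
          sort_tupE hval huniq]
      unfold tupA tupB tupC tupE
      simp [List.toFinset_append, List.toFinset_reverse]
    rw [Finset.union_assoc, Finset.union_assoc, hU]
    apply Finset.eq_univ_of_forall
    intro x
    rw [List.mem_toFinset, wN]
    exact List.mem_ofFn.mpr ⟨π.symm x, by simp⟩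
  · -- ∀ x ∈ A, ∃ y ∈ B, x < y
    intro x hx
    rw [tupA, List.mem_toFinset, List.mem_iff_getElem] at hx
    obtain ⟨i, hi, hix⟩ := hx
    rw [hlenA] at hi
    refine ⟨π ⟨aN π, by omega⟩, ?_, ?_⟩
    · rw [tupB, List.mem_toFinset, List.mem_iff_getElem]
      refine ⟨0, by omega, ?_⟩
      rw [List.getElem_take, List.getElem_drop, wN_get π (by omega)]
      congr 1
    · rw [← hix, List.getElem_take, wN_get π (by omega)]
      exact chain_asc (l := 0) (r := aN π) (by omega)
        (fun k _ hk => not_descAt_lt_aN hk) i (aN π) (by omega) (by omega) le_rfl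
  · -- ∀ x ∈ E, ∃ y ∈ C, x < y
    intro x hx
    rw [tupE, List.mem_toFinset, List.mem_iff_getElem] at hx
    obtain ⟨i, hi, hix⟩ := hx
    rw [hlenE] at hi
    refine ⟨π ⟨cN π, by omega⟩, ?_, ?_⟩
    · rw [tupC, List.mem_toFinset, List.mem_iff_getElem]
      refine ⟨cN π - vN π - 1, by omega, ?_⟩
      rw [List.getElem_take, List.getElem_drop, wN_get π (by omega)]
      congr 1
      exact Fin.ext (by show vN π + 1 + (cN π - vN π - 1) = cN π; omega)
    · rw [← hix, List.getElem_drop, wN_get π (by omega)]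
      exact chain_desc (l := cN π) (r := n - 1) (by omega)
        (fun k hk1 hk2 => descAt_of_ge_cN hval huniq hk1 (by omega)) (cN π) (cN π + 1 + i)
        le_rfl (by omega) (by omega)
  · -- ∀ z ∈ C, ∃ y ∈ B, y < z
    intro z hz
    rw [tupC, List.mem_toFinset, List.mem_iff_getElem] at hz
    obtain ⟨i, hi, hiz⟩ := hz
    rw [hlenC] at hi
    refine ⟨π ⟨vN π, by omega⟩, ?_, ?_⟩
    · rw [tupB, List.mem_toFinset, List.mem_iff_getElem]
      refine ⟨vN π - aN π, by omega, ?_⟩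
      rw [List.getElem_take, List.getElem_drop, wN_get π (by omega)]
      congr 1
      exact Fin.ext (by show aN π + (vN π - aN π) = vN π; omega)
    · rw [← hiz, List.getElem_take, List.getElem_drop, wN_get π (by omega)]
      exact chain_asc (l := vN π) (r := cN π) (by omega)
        (fun k hk1 hk2 => not_descAt_of_lt_cN hval huniq hk1 hk2) (vN π) (vN π + 1 + i)
        le_rfl (by omega) (by omega)

theorem permOf_tup (hval : IsValley π v) (huniq : ∀ ℓ, IsValley π ℓ → ℓ = v) :
    permOf (tupA π) (tupB π) (tupC π) (tupE π) (valid_tup hval huniq) = π := by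
  apply Equiv.ext
  intro i
  rw [permOf_apply]
  rw [List.getElem_of_eq (wordOf_tup hval huniq), wN_get π i.isLt]

end Encode2


section Decode2

variable {A B C E : Finset (Fin n)}

theorem descAt_permOf_iff (hv : Valid A B C E) (j : ℕ) :
    DescAt (permOf A B C E hv) j ↔
      (j + 1 < n ∧ ((A.card ≤ j ∧ j < A.card + B.card - 1) ∨
        A.card + B.card + C.card - 1 ≤ j)) := by
  constructor
  · rintro ⟨h2, hd⟩
    refine ⟨h2, ?_⟩
    rw [permOf_apply, permOf_apply] at hd
    exact (word_gt_iff hv h2).mp hd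
  · rintro ⟨h2, hcase⟩
    refine ⟨h2, ?_⟩
    rw [permOf_apply, permOf_apply]
    exact (word_gt_iff hv h2).mpr hcase

theorem aN_permOf (hv : Valid A B C E) : aN (permOf A B C E hv) = A.card := by
  have hb := hv.2.2.1
  have hc := hv.2.2.2.1
  have hn' := hv.1
  have hmem : DescAt (permOf A B C E hv) A.card :=
    (descAt_permOf_iff hv _).mpr ⟨by omega, Or.inl ⟨le_rfl, by omega⟩⟩
  have hmem' : A.card ∈ {i : ℕ | DescAt (permOf A B C E hv) i} := hmem
  apply le_antisymm (Nat.sInf_le hmem')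
  apply le_csInf ⟨A.card, hmem'⟩
  intro x hx
  by_contra hcon
  have := (descAt_permOf_iff hv x).mp hx
  omega

theorem vN_permOf (hv : Valid A B C E) : vN (permOf A B C E hv) = A.card + B.card - 1 := by
  have hb := hv.2.2.1
  have hc := hv.2.2.2.1
  have hn' := hv.1
  have hmem : ∃ h : A.card + B.card - 1 < n,
      IsValley (permOf A B C E hv) ⟨A.card + B.card - 1, h⟩ :=
    ⟨by omega, (isValley_permOf_iff hv _).mpr rfl⟩
  apply le_antisymm (Nat.sInf_le hmem)
  apply le_csInf ⟨A.card + B.card - 1, hmem⟩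
  rintro x ⟨hx, hvx⟩
  have := (isValley_permOf_iff hv _).mp hvx
  simp at this
  omega

theorem cN_permOf (hv : Valid A B C E) :
    cN (permOf A B C E hv) = A.card + B.card + C.card - 1 := by
  have hb := hv.2.2.1
  have hc := hv.2.2.2.1
  have hn' := hv.1
  have hvN := vN_permOf hv
  apply le_antisymm
  · apply Nat.sInf_le
    rcases Nat.eq_or_lt_of_le (show A.card + B.card + C.card ≤ n by omega) with he | hlt
    · right
      show A.card + B.card + C.card - 1 = n - 1
      omega
    · left
      refine ⟨by omega, (descAt_permOf_iff hv _).mpr ⟨by omega, Or.inr le_rfl⟩⟩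
  · apply le_csInf ⟨n-1, Or.inr rfl⟩
    rintro x (⟨hx1, hx2⟩ | hx)
    · have := (descAt_permOf_iff hv x).mp hx2
      omega
    · have : x = n - 1 := hx
      omega

theorem wN_permOf (hv : Valid A B C E) : wN (permOf A B C E hv) = wordOf A B C E := by
  apply List.ext_getElem (by rw [length_wN, length_wordOf_eq_n hv])
  intro i h1 h2
  rw [wN_get _ (by rwa [length_wN] at h1), permOf_apply]

theorem tup_permOf (hv : Valid A B C E) :
    tupA (permOf A B C E hv) = A ∧ tupB (permOf A B C E hv) = B ∧
    tupC (permOf A B C E hv) = C ∧ tupE (permOf A B C E hv) = E := by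
  have hb := hv.2.2.1
  have hc := hv.2.2.2.1
  have hn' := hv.1
  have h1 : (A.sort (·≤·)).length = A.card := Finset.length_sort _
  have h2 : ((B.sort (·≤·)).reverse).length = B.card := by
    rw [List.length_reverse, Finset.length_sort]
  have h3 : (C.sort (·≤·)).length = C.card := Finset.length_sort _
  refine ⟨?_, ?_, ?_, ?_⟩
  · unfold tupA
    rw [wN_permOf hv, aN_permOf hv]
    unfold wordOf
    rw [List.take_left' h1, Finset.sort_toFinset]
  · unfold tupB
    rw [wN_permOf hv, aN_permOf hv, vN_permOf hv]
    unfold wordOf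
    rw [List.drop_left' h1,
        show A.card + B.card - 1 + 1 - A.card = B.card by omega,
        List.take_left' h2, List.toFinset_reverse, Finset.sort_toFinset]
  · unfold tupC
    rw [wN_permOf hv, vN_permOf hv, cN_permOf hv]
    unfold wordOf
    rw [show A.card + B.card - 1 + 1 = A.card + B.card by omega,
        show A.card + B.card + C.card - 1 - (A.card + B.card - 1) = C.card by omega,
        ← List.drop_drop, List.drop_left' h1, List.drop_left' h2,
        List.take_left' h3, Finset.sort_toFinset]
  · unfold tupE
    rw [wN_permOf hv, cN_permOf hv]
    unfold wordOf
    rw [show A.card + B.card + C.card - 1 + 1 = A.card + (B.card + C.card) by omega,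
        ← List.drop_drop, ← List.drop_drop, List.drop_left' h1, List.drop_left' h2,
        List.drop_left' h3, List.toFinset_reverse, Finset.sort_toFinset]

end Decode2


/-! ### Counting -/

open Classical in
noncomputable def validTuples (n : ℕ) :
    Finset ((Finset (Fin n)) × (Finset (Fin n)) × (Finset (Fin n)) × (Finset (Fin n))) :=
  univ.filter (fun T => Valid T.1 T.2.1 T.2.2.1 T.2.2.2)

theorem mem_validTuples {T} : T ∈ validTuples n ↔ Valid T.1 T.2.1 T.2.2.1 T.2.2.2 := by
  classical
  simp [validTuples]

def UB (m : Fin n) (L : Finset (Fin n)) : Finset (Fin n) := L.filter (fun x => m ≤ x)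
def UC (m : Fin n) (L : Finset (Fin n)) : Finset (Fin n) := Lᶜ.filter (fun x => m < x)

theorem Valid.disjointAB_CE {A B C E : Finset (Fin n)} (hv : Valid A B C E) :
    Disjoint (A ∪ B) (C ∪ E) := by
  obtain ⟨d1, d2, d3⟩ := hv.disjoints
  refine Finset.disjoint_union_right.mpr ⟨d2, ?_⟩
  exact Finset.disjoint_of_subset_left (Finset.subset_union_left) d3

theorem Valid.compl_eq {A B C E : Finset (Fin n)} (hv : Valid A B C E) :
    C ∪ E = (A ∪ B)ᶜ := by
  have hd := hv.disjointAB_CE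
  have hu : (A ∪ B) ∪ (C ∪ E) = univ := by
    rw [← Finset.union_assoc]
    exact hv.2.1
  ext x
  constructor
  · intro hx
    rw [Finset.mem_compl]
    exact fun hx' => Finset.disjoint_left.mp hd hx' hx
  · intro hx
    rw [Finset.mem_compl] at hx
    have : x ∈ (A ∪ B) ∪ (C ∪ E) := hu ▸ Finset.mem_univ x
    rcases Finset.mem_union.mp this with h | h
    · exact absurd h hx
    · exact h

section Fiber

open Classical

variable {m : Fin n} {L : Finset (Fin n)}

theorem fiber_card_pos (hm : m ∈ L) (hUB : 2 ≤ #(UB m L)) (hUC : (UC m L).Nonempty) :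
    #((validTuples n).filter (fun T => T.2.1.min = ↑m ∧ T.1 ∪ T.2.1 = L))
      = 2^(#(UB m L) - 2) * 2^(#(UC m L) - 1) := by
  have hUBne : (UB m L).Nonempty := Finset.card_pos.mp (by omega)
  set MB := (UB m L).max' hUBne with hMB
  set MC := (UC m L).max' hUC with hMC
  have hmUB : m ∈ UB m L := Finset.mem_filter.mpr ⟨hm, le_rfl⟩
  have hmMB : m < MB := by
    rcases lt_or_ge m MB with h | h
    · exact h
    · exfalso
      have : UB m L ⊆ {m} := by
        intro x hx
        have h1 : m ≤ x := (Finset.mem_filter.mp hx).2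
        have h2 : x ≤ MB := Finset.le_max' _ _ hx
        rw [Finset.mem_singleton]
        exact le_antisymm (le_trans h2 h) h1
      have := Finset.card_le_card this
      simp at this
      omega
  have hMBUB : MB ∈ UB m L := Finset.max'_mem _ _
  have hMCUC : MC ∈ UC m L := Finset.max'_mem _ _
  have hmMC : m < MC := (Finset.mem_filter.mp hMCUC).2
  have hpair : ({m, MB} : Finset (Fin n)) ⊆ UB m L := by
    intro x hx
    rcases Finset.mem_insert.mp hx with h | h
    · exact h ▸ hmUB
    · rw [Finset.mem_singleton] at h
      exact h ▸ hMBUB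
  have hsing : ({MC} : Finset (Fin n)) ⊆ UC m L := Finset.singleton_subset_iff.mpr hMCUC
  rw [show (2:ℕ)^(#(UB m L) - 2) * 2^(#(UC m L) - 1)
      = #((Finset.Icc ({m, MB} : Finset (Fin n)) (UB m L)) ×ˢ
          (Finset.Icc ({MC} : Finset (Fin n)) (UC m L))) by
    rw [Finset.card_product, Finset.card_Icc_finset hpair, Finset.card_Icc_finset hsing]
    rw [Finset.card_pair (ne_of_lt hmMB), Finset.card_singleton]]
  apply Finset.card_bij' (i := fun T _ => (T.2.1, T.2.2.1))
    (j := fun p _ => (L \ p.1, p.1, p.2, Lᶜ \ p.2))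
  · -- hi : image lands in target
    rintro ⟨A, B, C, E⟩ hT
    rw [Finset.mem_filter] at hT
    obtain ⟨hvT, hmin, hAB⟩ := hT
    have hv : Valid A B C E := mem_validTuples.mp hvT
    have hBne : B.Nonempty := Finset.card_pos.mp (by have := hv.2.2.1; omega)
    have hminB : B.min' hBne = m := by
      have h1 := Finset.coe_min' hBne
      rw [hmin] at h1
      exact_mod_cast h1
    have hBsub : B ⊆ UB m L := fun x hx => Finset.mem_filter.mpr
      ⟨hAB ▸ Finset.mem_union_right _ hx, hminB ▸ Finset.min'_le _ _ hx⟩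
    have hCE : C ∪ E = Lᶜ := by rw [← hAB]; exact hv.compl_eq
    have hCsub : C ⊆ UC m L := by
      intro x hx
      refine Finset.mem_filter.mpr ⟨hCE ▸ Finset.mem_union_left _ hx, ?_⟩
      obtain ⟨y, hy, hyx⟩ := hv.2.2.2.2.2.2 x hx
      exact lt_of_le_of_lt (hminB ▸ Finset.min'_le _ _ hy) hyx
    have hMBB : MB ∈ B := by
      have hL : MB ∈ A ∪ B := by
        rw [hAB]
        exact (Finset.mem_filter.mp hMBUB).1
      rcases Finset.mem_union.mp hL with h | h
      · obtain ⟨y, hy, hMBy⟩ := hv.2.2.2.2.1 MB h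
        exact absurd hMBy (not_lt.mpr (Finset.le_max' _ _ (hBsub hy)))
      · exact h
    have hMCC : MC ∈ C := by
      have hL : MC ∈ C ∪ E := by
        rw [hCE]
        exact (Finset.mem_filter.mp hMCUC).1
      rcases Finset.mem_union.mp hL with h | h
      · exact h
      · obtain ⟨y, hy, hMCy⟩ := hv.2.2.2.2.2.1 MC h
        exact absurd hMCy (not_lt.mpr (Finset.le_max' _ _ (hCsub hy)))
    rw [Finset.mem_product]
    constructor
    · rw [Finset.mem_Icc]
      exact ⟨(Finset.insert_subset_iff.mpr
        ⟨hminB ▸ Finset.min'_mem _ _, Finset.singleton_subset_iff.mpr hMBB⟩ :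
          ({m, MB} : Finset (Fin n)) ⊆ B), hBsub⟩
    · rw [Finset.mem_Icc]
      exact ⟨(Finset.singleton_subset_iff.mpr hMCC : ({MC} : Finset (Fin n)) ⊆ C), hCsub⟩
  · -- hj : j lands in the fiber
    rintro ⟨B', C'⟩ hp
    rw [Finset.mem_product, Finset.mem_Icc, Finset.mem_Icc] at hp
    obtain ⟨⟨hBlo, hBhi⟩, hClo, hChi⟩ := hp
    have hB'sub : B' ⊆ UB m L := hBhi
    have hC'sub : C' ⊆ UC m L := hChi
    have hmB' : m ∈ B' := hBlo (Finset.mem_insert_self _ _)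
    have hMBB' : MB ∈ B' := hBlo (Finset.mem_insert_of_mem (Finset.mem_singleton_self _))
    have hMCC' : MC ∈ C' := hClo (Finset.mem_singleton_self _)
    have hB'L : B' ⊆ L := fun x hx => (Finset.mem_filter.mp (hB'sub hx)).1
    have hB'ge : ∀ x ∈ B', m ≤ x := fun x hx => (Finset.mem_filter.mp (hB'sub hx)).2
    have hC'compl : C' ⊆ Lᶜ := fun x hx => (Finset.mem_filter.mp (hC'sub hx)).1
    have hC'gt : ∀ x ∈ C', m < x := fun x hx => (Finset.mem_filter.mp (hC'sub hx)).2
    have hAeq : (L \ B') ∪ B' = L := Finset.sdiff_union_of_subset hB'L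
    have hEeq : C' ∪ (Lᶜ \ C') = Lᶜ := Finset.union_sdiff_of_subset hC'compl
    have hvalid : Valid (L \ B') B' C' (Lᶜ \ C') := by
      refine ⟨?_, ?_, ?_, ?_, ?_, ?_, ?_⟩
      · -- cards
        have h1 := Finset.card_sdiff_add_card_eq_card hB'L
        have h2 := Finset.card_sdiff_add_card_eq_card hC'compl
        have h3 := Finset.card_add_card_compl L
        rw [Fintype.card_fin] at h3
        omega
      · rw [Finset.union_assoc, Finset.union_assoc]
        rw [hEeq, ← Finset.union_assoc, hAeq]
        exact Finset.union_compl L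
      · calc 2 = #({m, MB} : Finset (Fin n)) := (Finset.card_pair (ne_of_lt hmMB)).symm
        _ ≤ #B' := Finset.card_le_card (by
            rw [Finset.insert_subset_iff, Finset.singleton_subset_iff]
            exact ⟨hmB', hMBB'⟩)
      · exact Finset.card_pos.mpr ⟨MC, hMCC'⟩
      · intro x hx
        refine ⟨MB, hMBB', ?_⟩
        obtain ⟨hxL, hxB'⟩ := Finset.mem_sdiff.mp hx
        rcases lt_or_ge x m with h | h
        · exact lt_of_lt_of_le h (le_of_lt hmMB)
        · have : x ∈ UB m L := Finset.mem_filter.mpr ⟨hxL, h⟩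
          have hle : x ≤ MB := Finset.le_max' _ _ this
          rcases lt_or_eq_of_le hle with h' | h'
          · exact h'
          · exact absurd (h' ▸ hMBB') hxB'
      · intro x hx
        refine ⟨MC, hMCC', ?_⟩
        obtain ⟨hxL, hxC'⟩ := Finset.mem_sdiff.mp hx
        rcases le_or_gt x m with h | h
        · exact lt_of_le_of_lt h hmMC
        · have : x ∈ UC m L := Finset.mem_filter.mpr ⟨hxL, h⟩
          have hle : x ≤ MC := Finset.le_max' _ _ this
          rcases lt_or_eq_of_le hle with h' | h'
          · exact h'
          · exact absurd (h' ▸ hMCC') hxC'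
      · intro z hz
        exact ⟨m, hmB', hC'gt z hz⟩
    rw [Finset.mem_filter]
    refine ⟨mem_validTuples.mpr hvalid, ?_, hAeq⟩
    have hB'ne : B'.Nonempty := ⟨m, hmB'⟩
    have : B'.min' hB'ne = m :=
      le_antisymm (Finset.min'_le _ _ hmB') (Finset.le_min' _ _ _ hB'ge)
    rw [← Finset.coe_min' hB'ne, this]
  · -- left inverse
    rintro ⟨A, B, C, E⟩ hT
    rw [Finset.mem_filter] at hT
    obtain ⟨hvT, hmin, hAB⟩ := hT
    have hv : Valid A B C E := mem_validTuples.mp hvT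
    have hdAB : Disjoint A B := hv.disjoints.1
    have hdCE : Disjoint C E := Finset.disjoint_of_subset_left Finset.subset_union_right
      hv.disjoints.2.2
    have hCE : C ∪ E = Lᶜ := by rw [← hAB]; exact hv.compl_eq
    have e1 : L \ B = A := by rw [← hAB]; exact Finset.union_sdiff_cancel_right hdAB
    have e2 : Lᶜ \ C = E := by rw [← hCE]; exact Finset.union_sdiff_cancel_left hdCE
    simp only [e1, e2]
  · rintro ⟨B', C'⟩ hp
    rfl

end Fiber


section Fiber2

open Classical

variable {m : Fin n} {L : Finset (Fin n)}

theorem fiber_card_zero (h : ¬(m ∈ L ∧ 2 ≤ #(UB m L) ∧ (UC m L).Nonempty)) :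
    ((validTuples n).filter (fun T => T.2.1.min = ↑m ∧ T.1 ∪ T.2.1 = L)) = ∅ := by
  rw [Finset.filter_eq_empty_iff]
  rintro ⟨A, B, C, E⟩ hT
  rintro ⟨hmin, hAB⟩
  apply h
  have hv : Valid A B C E := mem_validTuples.mp hT
  have hBne : B.Nonempty := Finset.card_pos.mp (by have := hv.2.2.1; omega)
  have hminB : B.min' hBne = m := by
    have h1 := Finset.coe_min' hBne
    rw [hmin] at h1
    exact_mod_cast h1
  have hBsub : B ⊆ UB m L := fun x hx => Finset.mem_filter.mpr
    ⟨hAB ▸ Finset.mem_union_right _ hx, hminB ▸ Finset.min'_le _ _ hx⟩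
  have hCE : C ∪ E = Lᶜ := by rw [← hAB]; exact hv.compl_eq
  have hCsub : C ⊆ UC m L := by
    intro x hx
    refine Finset.mem_filter.mpr ⟨hCE ▸ Finset.mem_union_left _ hx, ?_⟩
    obtain ⟨y, hy, hyx⟩ := hv.2.2.2.2.2.2 x hx
    exact lt_of_le_of_lt (hminB ▸ Finset.min'_le _ _ hy) hyx
  have hCne : C.Nonempty := Finset.card_pos.mp (by have := hv.2.2.2.1; omega)
  refine ⟨?_, ?_, ?_⟩
  · have : m ∈ B := hminB ▸ Finset.min'_mem _ _
    exact hAB ▸ Finset.mem_union_right _ this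
  · calc 2 ≤ #B := hv.2.2.1
    _ ≤ #(UB m L) := Finset.card_le_card hBsub
  · obtain ⟨x, hx⟩ := hCne
    exact ⟨x, hCsub hx⟩

theorem UB_insert {P Q : Finset (Fin n)} (hP : P ⊆ Finset.Iio m) (hQ : Q ⊆ Finset.Ioi m) :
    UB m (insert m (P ∪ Q)) = insert m Q := by
  ext x
  simp only [UB, Finset.mem_filter, Finset.mem_insert, Finset.mem_union]
  constructor
  · rintro ⟨h1 | h1 | h1, h2⟩
    · exact Or.inl h1
    · exact absurd (Finset.mem_Iio.mp (hP h1)) (not_lt.mpr h2)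
    · exact Or.inr h1
  · rintro (h | h)
    · exact ⟨Or.inl h, le_of_eq h.symm⟩
    · exact ⟨Or.inr (Or.inr h), le_of_lt (Finset.mem_Ioi.mp (hQ h))⟩

theorem UC_insert {P Q : Finset (Fin n)} (hP : P ⊆ Finset.Iio m) (hQ : Q ⊆ Finset.Ioi m) :
    UC m (insert m (P ∪ Q)) = Finset.Ioi m \ Q := by
  ext x
  simp only [UC, Finset.mem_filter, Finset.mem_compl, Finset.mem_insert, Finset.mem_union,
    Finset.mem_sdiff, Finset.mem_Ioi]
  constructor
  · rintro ⟨h1, h2⟩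
    exact ⟨h2, fun hq => h1 (Or.inr (Or.inr hq))⟩
  · rintro ⟨h1, h2⟩
    refine ⟨?_, h1⟩
    rintro (h | h | h)
    · exact absurd h (ne_of_gt h1)
    · exact absurd (Finset.mem_Iio.mp (hP h)) (not_lt.mpr (le_of_lt h1))
    · exact h2 h

theorem sum_choose_mid (t : ℕ) :
    ∑ j ∈ Finset.range (t+1), t.choose j * (if 1 ≤ j ∧ j ≤ t-1 then (2:ℕ)^(t-2) else 0)
      = if 2 ≤ t then 2^(t-2) * (2^t - 2) else 0 := by
  rcases Nat.lt_or_ge t 2 with ht | ht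
  · rw [if_neg (by omega)]
    apply Finset.sum_eq_zero
    intro j hj
    rw [Finset.mem_range] at hj
    rw [if_neg (by omega), mul_zero]
  · rw [if_pos ht]
    have h1 : ∀ j, t.choose j * (if 1 ≤ j ∧ j ≤ t-1 then (2:ℕ)^(t-2) else 0)
        = if 1 ≤ j ∧ j ≤ t-1 then t.choose j * 2^(t-2) else 0 := by
      intro j
      split <;> simp
    simp only [h1]
    rw [← Finset.sum_filter]
    have h2 : (Finset.range (t+1)).filter (fun j => 1 ≤ j ∧ j ≤ t-1) = Finset.Ico 1 t := by
      ext j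
      simp only [Finset.mem_filter, Finset.mem_range, Finset.mem_Ico]
      omega
    rw [h2]
    have h3 : ∑ j ∈ Finset.Ico 1 t, t.choose j = 2^t - 2 := by
      have h4 := Nat.sum_range_choose t
      have h5 : ∑ j ∈ Finset.range (t+1), t.choose j
          = ∑ j ∈ Finset.Ico 0 (t+1), t.choose j := by
        rw [Finset.range_eq_Ico]
      have h6 : ∑ j ∈ Finset.Ico 0 (t+1), t.choose j
          = t.choose 0 + ∑ j ∈ Finset.Ico 1 (t+1), t.choose j := by
        rw [Finset.sum_eq_sum_Ico_succ_bot (by omega)]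
      have h7 : ∑ j ∈ Finset.Ico 1 (t+1), t.choose j
          = ∑ j ∈ Finset.Ico 1 t, t.choose j + t.choose t := by
        rw [Finset.sum_Ico_succ_top (by omega)]
      rw [Nat.choose_zero_right] at h6
      rw [Nat.choose_self] at h7
      omega
    rw [← Finset.sum_mul, h3]
    ring

theorem level2 (m : Fin n) :
    #((validTuples n).filter (fun T => T.2.1.min = (m : WithTop (Fin n))))
      = 2 ^ (m.val) * (if 2 ≤ n - 1 - m.val then
          2^(n-1-m.val-2) * (2^(n-1-m.val) - 2) else 0) := by
  have hstep1 := Finset.card_eq_sum_card_fiberwise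
    (f := fun T : (Finset (Fin n)) × (Finset (Fin n)) × (Finset (Fin n)) × (Finset (Fin n)) =>
      T.1 ∪ T.2.1)
    (s := (validTuples n).filter (fun T => T.2.1.min = (m : WithTop (Fin n))))
    (t := univ) (fun x _ => Finset.mem_univ _)
  rw [hstep1]
  have hstep2 : ∀ L : Finset (Fin n),
      ((validTuples n).filter (fun T => T.2.1.min = (m : WithTop (Fin n)))).filter
        (fun T => T.1 ∪ T.2.1 = L)
      = (validTuples n).filter (fun T => T.2.1.min = ↑m ∧ T.1 ∪ T.2.1 = L) := by
    intro L
    rw [Finset.filter_filter]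
  have hF : ∀ L : Finset (Fin n),
      #((validTuples n).filter (fun T => T.2.1.min = ↑m ∧ T.1 ∪ T.2.1 = L))
      = if (m ∈ L ∧ 2 ≤ #(UB m L) ∧ (UC m L).Nonempty)
          then 2^(#(UB m L) - 2) * 2^(#(UC m L) - 1) else 0 := by
    intro L
    by_cases h : (m ∈ L ∧ 2 ≤ #(UB m L) ∧ (UC m L).Nonempty)
    · rw [if_pos h]
      exact fiber_card_pos h.1 h.2.1 h.2.2
    · rw [if_neg h, fiber_card_zero h, Finset.card_empty]
  simp only [hstep2, hF]
  -- restrict to L containing m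
  rw [← Finset.sum_subset (Finset.filter_subset (fun L => m ∈ L) univ)
    (by
      intro L _ hL
      rw [Finset.mem_filter] at hL
      push_neg at hL
      rw [if_neg (by
        rintro ⟨h1, -⟩
        exact hL (Finset.mem_univ L) h1)])]
  -- bijection with pairs (P, Q)
  rw [Finset.sum_nbij' (i := fun L => (L ∩ Finset.Iio m, L ∩ Finset.Ioi m))
    (j := fun p => insert m (p.1 ∪ p.2))
    (t := (Finset.Iio m).powerset ×ˢ (Finset.Ioi m).powerset)
    (g := fun p => if 1 ≤ #p.2 ∧ #p.2 ≤ (n - 1 - m.val) - 1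
        then 2^(#p.2 - 1) * 2^((n - 1 - m.val) - #p.2 - 1) else 0)
    (by
      intro L _
      rw [Finset.mem_product, Finset.mem_powerset, Finset.mem_powerset]
      exact ⟨Finset.inter_subset_right, Finset.inter_subset_right⟩)
    (by
      intro p _
      rw [Finset.mem_filter]
      exact ⟨Finset.mem_univ _, Finset.mem_insert_self _ _⟩)
    (by
      intro L hL
      rw [Finset.mem_filter] at hL
      ext x
      simp only [Finset.mem_insert, Finset.mem_union, Finset.mem_inter, Finset.mem_Iio,
        Finset.mem_Ioi]
      constructor
      · rintro (h | ⟨h, -⟩ | ⟨h, -⟩)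
        · exact h ▸ hL.2
        · exact h
        · exact h
      · intro hx
        rcases lt_trichotomy x m with h | h | h
        · exact Or.inr (Or.inl ⟨hx, h⟩)
        · exact Or.inl h
        · exact Or.inr (Or.inr ⟨hx, h⟩))
    (by
      rintro ⟨P, Q⟩ hp
      rw [Finset.mem_product, Finset.mem_powerset, Finset.mem_powerset] at hp
      obtain ⟨hP, hQ⟩ := hp
      have e1 : insert m (P ∪ Q) ∩ Finset.Iio m = P := by
        ext x
        simp only [Finset.mem_inter, Finset.mem_insert, Finset.mem_union, Finset.mem_Iio]
        constructor
        · rintro ⟨h | h | h, h2⟩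
          · omega
          · exact h
          · exact absurd (Finset.mem_Ioi.mp (hQ h)) (not_lt.mpr (le_of_lt h2))
        · intro h
          exact ⟨Or.inr (Or.inl h), Finset.mem_Iio.mp (hP h)⟩
      have e2 : insert m (P ∪ Q) ∩ Finset.Ioi m = Q := by
        ext x
        simp only [Finset.mem_inter, Finset.mem_insert, Finset.mem_union, Finset.mem_Ioi]
        constructor
        · rintro ⟨h | h | h, h2⟩
          · omega
          · exact absurd (Finset.mem_Iio.mp (hP h)) (not_lt.mpr (le_of_lt h2))
          · exact h
        · intro h
          exact ⟨Or.inr (Or.inr h), Finset.mem_Ioi.mp (hQ h)⟩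
      simp only [e1, e2])
    (by
      intro L hL
      rw [Finset.mem_filter] at hL
      dsimp only
      have hP : L ∩ Finset.Iio m ⊆ Finset.Iio m := Finset.inter_subset_right
      have hQ : L ∩ Finset.Ioi m ⊆ Finset.Ioi m := Finset.inter_subset_right
      have hUBe := UB_insert (m := m) hP hQ
      have hUCe := UC_insert (m := m) hP hQ
      have hLe : insert m ((L ∩ Finset.Iio m) ∪ (L ∩ Finset.Ioi m)) = L := by
        ext x
        simp only [Finset.mem_insert, Finset.mem_union, Finset.mem_inter, Finset.mem_Iio,
          Finset.mem_Ioi]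
        constructor
        · rintro (h | ⟨h, -⟩ | ⟨h, -⟩)
          · exact h ▸ hL.2
          · exact h
          · exact h
        · intro hx
          rcases lt_trichotomy x m with h | h | h
          · exact Or.inr (Or.inl ⟨hx, h⟩)
          · exact Or.inl h
          · exact Or.inr (Or.inr ⟨hx, h⟩)
      rw [hLe] at hUBe hUCe
      have hmQ : m ∉ L ∩ Finset.Ioi m := by
        simp [Finset.mem_inter]
      have hcardUB : #(UB m L) = #(L ∩ Finset.Ioi m) + 1 := by
        rw [hUBe, Finset.card_insert_of_notMem hmQ]
      have hcardUC : #(UC m L) = (n - 1 - m.val) - #(L ∩ Finset.Ioi m) := by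
        rw [hUCe, Finset.card_sdiff_of_subset hQ, Fin.card_Ioi]
      have hQle : #(L ∩ Finset.Ioi m) ≤ n - 1 - m.val := by
        calc #(L ∩ Finset.Ioi m) ≤ #(Finset.Ioi m) := Finset.card_le_card hQ
        _ = n - 1 - m.val := Fin.card_Ioi m
      by_cases hcond : (m ∈ L ∧ 2 ≤ #(UB m L) ∧ (UC m L).Nonempty)
      · rw [if_pos hcond, if_pos]
        · rw [hcardUB, hcardUC]
          have he : #(L ∩ Finset.Ioi m) + 1 - 2 = #(L ∩ Finset.Ioi m) - 1 := by omega
          rw [he]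
        · obtain ⟨-, h2, h3⟩ := hcond
          rw [hcardUB] at h2
          rw [← Finset.card_pos, hcardUC] at h3
          omega
      · rw [if_neg hcond, if_neg]
        rintro ⟨h1, h2⟩
        apply hcond
        refine ⟨hL.2, ?_, ?_⟩
        · rw [hcardUB]; omega
        · rw [← Finset.card_pos, hcardUC]; omega)]
  -- now evaluate the sum over pairs
  rw [Finset.sum_product]
  rw [Finset.sum_const_nat (m := ∑ Q ∈ (Finset.Ioi m).powerset,
      if 1 ≤ #Q ∧ #Q ≤ (n - 1 - m.val) - 1
        then 2^(#Q - 1) * 2^((n - 1 - m.val) - #Q - 1) else 0) (fun _ _ => rfl)]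
  rw [Finset.card_powerset, Fin.card_Iio]
  congr 1
  -- inner sum over Q
  set t := n - 1 - m.val with ht
  have hcard : #(Finset.Ioi m) = t := Fin.card_Ioi m
  rw [Finset.sum_powerset]
  have hinner : ∀ j ∈ Finset.range (#(Finset.Ioi m) + 1),
      (∑ Q ∈ Finset.powersetCard j (Finset.Ioi m),
        if 1 ≤ #Q ∧ #Q ≤ t - 1 then (2:ℕ)^(#Q - 1) * 2^(t - #Q - 1) else 0)
      = t.choose j * (if 1 ≤ j ∧ j ≤ t-1 then (2:ℕ)^(t-2) else 0) := by
    intro j hj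
    rw [Finset.mem_range, hcard] at hj
    have : ∀ Q ∈ Finset.powersetCard j (Finset.Ioi m),
        (if 1 ≤ #Q ∧ #Q ≤ t - 1 then (2:ℕ)^(#Q - 1) * 2^(t - #Q - 1) else 0)
        = (if 1 ≤ j ∧ j ≤ t-1 then (2:ℕ)^(t-2) else 0) := by
      intro Q hQ
      obtain ⟨-, hQc⟩ := Finset.mem_powersetCard.mp hQ
      rw [hQc]
      by_cases hc : 1 ≤ j ∧ j ≤ t - 1
      · rw [if_pos hc, if_pos hc, ← pow_add]
        congr 1
        omega
      · rw [if_neg hc, if_neg hc]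
    rw [Finset.sum_congr rfl this, Finset.sum_const, Finset.card_powersetCard, hcard,
      smul_eq_mul]
  rw [Finset.sum_congr rfl hinner, hcard, sum_choose_mid]

end Fiber2


section Final

open Classical

theorem geom_aux (M : ℕ) :
    ∑ j ∈ Finset.range M, ((2:ℕ)^(j+1) - 1) = 2^(M+1) - 2 - M := by
  induction M with
  | zero => simp
  | succ M ih =>
    rw [Finset.sum_range_succ, ih]
    have h1 : M + 1 < 2^(M+1) := Nat.lt_two_pow_self
    have h2 : (2:ℕ)^(M+2) = 2 * 2^(M+1) := by rw [pow_succ]; ring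
    omega

theorem sum_range_eval (hn : 3 ≤ n) :
    ∑ k ∈ Finset.range n, (2:ℕ)^k * (if 2 ≤ n-1-k then 2^(n-1-k-2)*(2^(n-1-k)-2) else 0)
      = 2^(n-2)*(2^(n-1)-n) := by
  rw [← Finset.sum_subset (Finset.range_subset_range.mpr (show n-2 ≤ n by omega))
    (by
      intro k hk hk2
      rw [Finset.mem_range] at hk hk2
      rw [if_neg (by omega), mul_zero])]
  have hcong : ∀ k ∈ Finset.range (n-2),
      (2:ℕ)^k * (if 2 ≤ n-1-k then 2^(n-1-k-2)*(2^(n-1-k)-2) else 0)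
      = 2^(n-2) * (2^(n-2-k) - 1) := by
    intro k hk
    rw [Finset.mem_range] at hk
    rw [if_pos (by omega)]
    have e1 : (2:ℕ)^(n-1-k) - 2 = 2*(2^(n-2-k)-1) := by
      have h1 : (2:ℕ)^(n-1-k) = 2 * 2^(n-2-k) := by
        rw [← pow_succ']
        congr 1
        omega
      have h2 : 1 ≤ (2:ℕ)^(n-2-k) := Nat.one_le_two_pow
      omega
    rw [e1]
    have e2 : (2:ℕ)^(n-2) = 2^k * 2^(n-1-k-2) * 2 := by
      rw [← pow_add, ← pow_succ]
      congr 1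
      omega
    rw [e2]
    ring
  rw [Finset.sum_congr rfl hcong, ← Finset.mul_sum]
  congr 1
  have hcong2 : ∀ k ∈ Finset.range (n-2),
      (2:ℕ)^(n-2-k) - 1 = (fun j => (2:ℕ)^(j+1) - 1) ((n-2) - 1 - k) := by
    intro k hk
    rw [Finset.mem_range] at hk
    simp only []
    congr 2
    omega
  rw [Finset.sum_congr rfl hcong2, Finset.sum_range_reflect (fun j => (2:ℕ)^(j+1) - 1) (n-2),
      geom_aux]
  have h1 : n - 2 + 1 = n - 1 := by omega
  rw [h1]
  omega

theorem card_validTuples (hn : 3 ≤ n) :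
    #(validTuples n) = 2^(n-2) * (2^(n-1) - n) := by
  have h1 := Finset.card_eq_sum_card_fiberwise
    (f := fun T : (Finset (Fin n)) × (Finset (Fin n)) × (Finset (Fin n)) × (Finset (Fin n)) =>
      T.2.1.min)
    (s := validTuples n)
    (t := univ.image (fun m : Fin n => (m : WithTop (Fin n))))
    (by
      intro T hT
      have hv := mem_validTuples.mp hT
      have hBne : T.2.1.Nonempty := Finset.card_pos.mp (by have := hv.2.2.1; omega)
      rw [Finset.mem_coe, Finset.mem_image]
      exact ⟨T.2.1.min' hBne, Finset.mem_univ _, Finset.coe_min' hBne⟩)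
  rw [h1, Finset.sum_image (by intro x _ y _ h; exact WithTop.coe_injective h)]
  have h2 : ∀ m : Fin n,
      #(Finset.filter (fun T : (Finset (Fin n)) × (Finset (Fin n)) × (Finset (Fin n)) ×
          (Finset (Fin n)) => T.2.1.min = (m : WithTop (Fin n))) (validTuples n))
      = 2 ^ (m.val) * (if 2 ≤ n - 1 - m.val then
          2^(n-1-m.val-2) * (2^(n-1-m.val) - 2) else 0) := fun m => level2 m
  rw [Finset.sum_congr rfl (fun m _ => h2 m)]
  rw [Fin.sum_univ_eq_sum_range
    (fun k => (2:ℕ)^k * (if 2 ≤ n-1-k then 2^(n-1-k-2)*(2^(n-1-k)-2) else 0)) n]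
  exact sum_range_eval hn

theorem card_perms_eq (hn : 3 ≤ n) :
    #(univ.filter (fun π : Equiv.Perm (Fin n) =>
        ∃ v, IsValley π v ∧ ∀ ℓ, IsValley π ℓ → ℓ = v))
      = #(validTuples n) := by
  apply Finset.card_bij'
    (i := fun π _ => (tupA π, tupB π, tupC π, tupE π))
    (j := fun T hT => permOf T.1 T.2.1 T.2.2.1 T.2.2.2 (mem_validTuples.mp hT))
  case hi =>
    intro π hπ
    rw [Finset.mem_filter] at hπ
    obtain ⟨-, v, hval, huniq⟩ := hπ
    exact mem_validTuples.mpr (valid_tup hval huniq)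
  case hj =>
    intro T hT
    simp only [Finset.mem_filter, Finset.mem_univ, true_and]
    have hv := mem_validTuples.mp hT
    have hb := hv.2.2.1
    have hc := hv.2.2.2.1
    have hn' := hv.1
    refine ⟨⟨#T.1 + #T.2.1 - 1, by omega⟩, ?_, ?_⟩
    · exact (isValley_permOf_iff (mem_validTuples.mp hT) _).mpr rfl
    · intro ℓ hℓ
      have := (isValley_permOf_iff (mem_validTuples.mp hT) ℓ).mp hℓ
      exact Fin.ext this
  case left_inv =>
    intro π hπ
    simp only [Finset.mem_filter, Finset.mem_univ, true_and] at hπ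
    obtain ⟨v, hval, huniq⟩ := hπ
    exact permOf_tup hval huniq
  case right_inv =>
    rintro ⟨A, B, C, E⟩ hT
    obtain ⟨e1, e2, e3, e4⟩ := tup_permOf (mem_validTuples.mp hT)
    simp only at e1 e2 e3 e4 ⊢
    rw [e1, e2, e3, e4]

end Final

end OneValleyAux

theorem increasing_one_valley_count (n : ℕ) (hn : 3 ≤ n) :
    {π : Equiv.Perm (Fin n) | Increasing π ∧ valCount π = 1}.ncard
      = 2 ^ (n - 2) * (2 ^ (n - 1) - n) := by
  classical
  have hset : {π : Equiv.Perm (Fin n) | Increasing π ∧ valCount π = 1}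
      = {π : Equiv.Perm (Fin n) | ∃ v, IsValley π v ∧ ∀ ℓ, IsValley π ℓ → ℓ = v} := by
    ext π
    simp only [Set.mem_setOf_eq]
    constructor
    · rintro ⟨hinc, hcount⟩
      obtain ⟨v, hv⟩ := Set.ncard_eq_one.mp hcount
      refine ⟨v, ?_, ?_⟩
      · have : v ∈ {ℓ : Fin n | IsValley π ℓ} := hv ▸ Set.mem_singleton v
        exact this
      · intro ℓ hℓ
        have : ℓ ∈ ({v} : Set (Fin n)) := hv ▸ hℓ
        exact this
    · rintro ⟨v, hval, huniq⟩
      have hs : {ℓ : Fin n | IsValley π ℓ} = {v} :=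
        Set.eq_singleton_iff_unique_mem.mpr ⟨hval, huniq⟩
      constructor
      · intro i j hi hj hij
        rw [huniq i hi, huniq j hj] at hij
        exact absurd hij (lt_irrefl v)
      · rw [valCount, hs]
        exact Set.ncard_singleton v
  rw [hset]
  have hcoe : {π : Equiv.Perm (Fin n) | ∃ v, IsValley π v ∧ ∀ ℓ, IsValley π ℓ → ℓ = v}
      = ↑(Finset.univ.filter (fun π : Equiv.Perm (Fin n) =>
          ∃ v, IsValley π v ∧ ∀ ℓ, IsValley π ℓ → ℓ = v)) := by
    ext π
    simp
  rw [hcoe, Set.ncard_coe_finset]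
  rw [OneValleyAux.card_perms_eq hn, OneValleyAux.card_validTuples hn]
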